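/- Let (M,d) be a separable metric space with its Borel σ-algebra, μ a Borel probability measure on M with μ({v ∈ M : d(u,v) = r}) = 0 for all u ∈ M and r ≥ 0, and let X₁, X₂, … be an i.i.d. sequence with law μ. Assume the entropy condition: (1/n)·E[ log card{ b ∈ {0,1}ⁿ : there exist u,v ∈ M with b_i = 1[d(u,X_i) ≤ d(u,v)] for all i = 1,…,n } ] → 0 as n → ∞. Then for every ε > 0, lim_{n→∞} sup_{u ∈ M, τ ∈ [1/n,1]} P*( there exists a τ-th empirical local quantile X_j at u with |F_μ(u,X_j) − τ| > ε ) = 0, where P* denotes outer probability. -/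

import Mathlib

open MeasureTheory Metric ProbabilityTheory Filter
open scoped ENNReal Topology

/-- The empirical metric distribution function
`F_n(u,v) = (1/n)·#{i : dist u (x i) ≤ dist u v}`. -/
noncomputable def emdf {M : Type*} [MetricSpace M] {n : ℕ}
    (x : Fin n → M) (u v : M) : ℝ :=
  ((Finset.univ.filter fun i => dist u (x i) ≤ dist u v).card : ℝ) / n

/-- The metric distribution function `F_μ(u,v) = μ(closedBall u (dist u v))`. -/
noncomputable def mdf {M : Type*} [MetricSpace M] [MeasurableSpace M]
    (μ : Measure M) (u v : M) : ℝ :=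
  (μ (closedBall u (dist u v))).toReal

/-- `x j` is a `τ`-th empirical local quantile at `u`. -/
def IsEmpLocQuantile {M : Type*} [MetricSpace M] {n : ℕ}
    (x : Fin n → M) (u : M) (τ : ℝ) (j : Fin n) : Prop :=
  τ ≤ emdf x u (x j) ∧ ∀ i : Fin n, τ ≤ emdf x u (x i) → emdf x u (x j) ≤ emdf x u (x i)

lemma aux_exists_quantile {M : Type*} [MetricSpace M] [MeasurableSpace M] [BorelSpace M]
    (μ : Measure M) [IsProbabilityMeasure μ]
    (hsph : ∀ (u : M) (r : ℝ), 0 ≤ r → μ {v | dist u v = r} = 0)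
    (u : M) {q : ℝ} (hq0 : 0 < q) (hq1 : q < 1) :
    ∃ t : ℝ, 0 ≤ t ∧ (μ (closedBall u t)).toReal = q := by
  classical
  set S : Set ℝ := {t : ℝ | ENNReal.ofReal q ≤ μ (closedBall u t)} with hS
  have hq0' : (0 : ℝ≥0∞) < ENNReal.ofReal q := ENNReal.ofReal_pos.2 hq0
  -- nonempty
  have hne : S.Nonempty := by
    rw [Set.nonempty_iff_ne_empty]
    intro h
    have hlt : ∀ t : ℝ, μ (closedBall u t) < ENNReal.ofReal q := by
      intro t
      have ht : t ∉ S := by rw [h]; exact Set.notMem_empty t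
      simp only [hS, Set.mem_setOf_eq, not_le] at ht
      exact ht
    have hmono : Monotone (fun k : ℕ => closedBall u (k : ℝ)) := by
      intro a b hab
      exact closedBall_subset_closedBall (by exact_mod_cast hab)
    have huniv : (⋃ k : ℕ, closedBall u (k : ℝ)) = Set.univ := by
      ext v
      simp only [Set.mem_iUnion, Set.mem_univ, iff_true, mem_closedBall]
      obtain ⟨k, hk⟩ := exists_nat_ge (dist v u)
      exact ⟨k, hk⟩
    have h1 : (1 : ℝ≥0∞) = μ (⋃ k : ℕ, closedBall u (k : ℝ)) := by
      rw [huniv, measure_univ]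
    rw [hmono.measure_iUnion] at h1
    have : (1:ℝ≥0∞) ≤ ENNReal.ofReal q := by
      rw [h1]
      exact iSup_le fun k => (hlt k).le
    have hq1' : ENNReal.ofReal q < 1 := by
      rw [← ENNReal.ofReal_one]
      exact ENNReal.ofReal_lt_ofReal_iff_of_nonneg hq0.le |>.2 hq1
    exact absurd (this.trans_lt hq1') (lt_irrefl _)
  have hlb : ∀ t ∈ S, (0:ℝ) ≤ t := by
    intro t ht
    by_contra h
    push_neg at h
    have : closedBall u t = ∅ := closedBall_eq_empty.2 h
    simp only [hS, Set.mem_setOf_eq, this, measure_empty] at ht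
    exact absurd (ht.trans_lt hq0') (lt_irrefl _)
  have hbdd : BddBelow S := ⟨0, hlb⟩
  set t₀ := sInf S with ht₀
  have ht₀0 : (0:ℝ) ≤ t₀ := le_csInf hne hlb
  -- lower bound : ofReal q ≤ μ (closedBall u t₀)
  have hlow : ENNReal.ofReal q ≤ μ (closedBall u t₀) := by
    have hiInter : (⋂ k : ℕ, closedBall u (t₀ + 1/(k+1))) = closedBall u t₀ := by
      ext v
      simp only [Set.mem_iInter, mem_closedBall]
      constructor
      · intro h
        by_contra hc
        push_neg at hc
        obtain ⟨k, hk⟩ := exists_nat_one_div_lt (sub_pos.2 hc)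
        have := h k
        linarith [hk]
      · intro h k
        have : (0:ℝ) < 1/(k+1) := by positivity
        linarith
    have htend : Tendsto (fun k : ℕ => μ (closedBall u (t₀ + 1/(k+1)))) atTop
        (𝓝 (μ (closedBall u t₀))) := by
      have := tendsto_measure_iInter_atTop (μ := μ)
        (s := fun k : ℕ => closedBall u (t₀ + 1/(k+1)))
        (fun k => (measurableSet_closedBall).nullMeasurableSet)
        (fun a b hab => closedBall_subset_closedBall (by
          have : (1:ℝ)/(b+1) ≤ 1/(a+1) := by
            apply one_div_le_one_div_of_le (by positivity)
            exact_mod_cast add_le_add_left (Nat.cast_le.2 hab) 1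
          linarith))
        ⟨0, measure_ne_top μ _⟩
      rwa [hiInter] at this
    refine ge_of_tendsto htend (Filter.Eventually.of_forall fun k => ?_)
    obtain ⟨t, htS, htlt⟩ := (csInf_lt_iff hbdd hne).1
      (show sInf S < t₀ + 1/(k+1) by
        have : (0:ℝ) < 1/(k+1) := by positivity
        linarith)
    exact le_trans htS (measure_mono (closedBall_subset_closedBall htlt.le))
  -- upper bound
  have hpos : 0 < t₀ := by
    rcases lt_or_eq_of_le ht₀0 with h | h
    · exact h
    · exfalso
      have hsub : closedBall u t₀ ⊆ {v | dist u v = 0} := by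
        intro v hv
        rw [← h] at hv
        simp only [mem_closedBall] at hv
        have := dist_nonneg (x := v) (y := u)
        simp only [Set.mem_setOf_eq, dist_comm u v]
        linarith
      have := le_trans hlow (le_trans (measure_mono hsub) (le_of_eq (hsph u 0 le_rfl)))
      exact absurd (hq0'.trans_le this) (lt_irrefl _)
  have hupp : μ (closedBall u t₀) ≤ ENNReal.ofReal q := by
    have hsplit : closedBall u t₀ ⊆ ball u t₀ ∪ {v | dist u v = t₀} := by
      intro v hv
      simp only [mem_closedBall] at hv
      rcases lt_or_eq_of_le hv with h | h
      · exact Or.inl (mem_ball.2 h)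
      · exact Or.inr (by simp [Set.mem_setOf_eq, dist_comm u v, h])
    have hball : μ (ball u t₀) ≤ ENNReal.ofReal q := by
      have hunion : ball u t₀ = ⋃ k : ℕ, closedBall u (t₀ - t₀/(k+2)) := by
        ext v
        simp only [Set.mem_iUnion, mem_ball, mem_closedBall]
        constructor
        · intro h
          obtain ⟨k, hk⟩ := exists_nat_ge (t₀ / (t₀ - dist v u))
          refine ⟨k, ?_⟩
          have hd : 0 < t₀ - dist v u := sub_pos.2 h
          have h2 : t₀ / (t₀ - dist v u) ≤ (k:ℝ) + 2 := by
            have : (k:ℝ) ≤ (k:ℝ) + 2 := by linarith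
            linarith [hk]
          have h3 : t₀ ≤ ((k:ℝ)+2) * (t₀ - dist v u) := by
            rw [div_le_iff₀ hd] at h2
            linarith
          have hk2 : (0:ℝ) < (k:ℝ)+2 := by positivity
          have : t₀/((k:ℝ)+2) ≤ t₀ - dist v u := by
            rw [div_le_iff₀ hk2]
            linarith [h3]
          linarith
        · intro ⟨k, hk⟩
          have : (0:ℝ) < t₀/(k+2) := by positivity
          linarith
      have hmono : Monotone (fun k : ℕ => closedBall u (t₀ - t₀/(k+2))) := by
        intro a b hab
        apply closedBall_subset_closedBall
        have : t₀/((b:ℝ)+2) ≤ t₀/((a:ℝ)+2) := by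
          apply div_le_div_of_nonneg_left hpos.le (by positivity)
          exact_mod_cast add_le_add_left (Nat.cast_le.2 hab) 2
        linarith
      rw [hunion, hmono.measure_iUnion]
      refine iSup_le fun k => ?_
      have hnotS : (t₀ - t₀/(k+2)) ∉ S := by
        intro hmem
        have := csInf_le hbdd hmem
        have hp : (0:ℝ) < t₀/(k+2) := by positivity
        rw [← ht₀] at this
        linarith
      simp only [hS, Set.mem_setOf_eq, not_le] at hnotS
      exact hnotS.le
    calc μ (closedBall u t₀) ≤ μ (ball u t₀ ∪ {v | dist u v = t₀}) := measure_mono hsplit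
      _ ≤ μ (ball u t₀) + μ {v | dist u v = t₀} := measure_union_le _ _
      _ = μ (ball u t₀) := by rw [hsph u t₀ ht₀0, add_zero]
      _ ≤ ENNReal.ofReal q := hball
  refine ⟨t₀, ht₀0, ?_⟩
  rw [le_antisymm hupp hlow, ENNReal.toReal_ofReal hq0.le]


lemma aux_cheb {M : Type*} [MetricSpace M] [MeasurableSpace M] [BorelSpace M]
    (μ : Measure M) [IsProbabilityMeasure μ]
    {Ω : Type*} [MeasureSpace Ω] [IsProbabilityMeasure (ℙ : Measure Ω)]
    (X : ℕ → Ω → M) (hXmeas : ∀ i, Measurable (X i))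
    (hXlaw : ∀ i, Measure.map (X i) ℙ = μ)
    (hXindep : iIndepFun X ℙ)
    (u : M) (t : ℝ) {n : ℕ} (hn : 0 < n) {δ : ℝ} (hδ : 0 < δ) :
    (ℙ : Measure Ω) {ω | δ < |((Finset.univ.filter
        fun i : Fin n => dist u (X i ω) ≤ t).card : ℝ) / n - (μ (closedBall u t)).toReal|}
      ≤ ENNReal.ofReal (1 / (n * δ^2)) := by
  classical
  set g : M → ℝ := (closedBall u t).indicator (fun _ => 1) with hg_def
  have hg : Measurable g := measurable_const.indicator measurableSet_closedBall
  set Z : ℕ → Ω → ℝ := fun i ω => g (X i ω) with hZ_def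
  have hZmeas : ∀ i, Measurable (Z i) := fun i => hg.comp (hXmeas i)
  have hZval : ∀ i ω, Z i ω = if dist u (X i ω) ≤ t then (1:ℝ) else 0 := by
    intro i ω
    simp only [hZ_def, hg_def, Set.indicator_apply, mem_closedBall, dist_comm (X i ω) u]
  have hZbd : ∀ i, ∀ᵐ ω ∂(ℙ : Measure Ω), ‖Z i ω‖ ≤ 1 := by
    intro i
    refine Filter.Eventually.of_forall fun ω => ?_
    rw [hZval, Real.norm_eq_abs]
    split <;> simp
  have hmem : ∀ i, MemLp (Z i) 2 (ℙ : Measure Ω) := fun i =>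
    MemLp.of_bound (hZmeas i).aestronglyMeasurable 1 (hZbd i)
  set p : ℝ := (μ (closedBall u t)).toReal with hp_def
  have hp0 : 0 ≤ p := ENNReal.toReal_nonneg
  have hp1 : p ≤ 1 := by
    rw [hp_def]
    have h1 : μ (closedBall u t) ≤ 1 := prob_le_one
    calc (μ (closedBall u t)).toReal ≤ (1 : ℝ≥0∞).toReal :=
          ENNReal.toReal_mono ENNReal.one_ne_top h1
      _ = 1 := ENNReal.toReal_one
  have hEZ : ∀ i, ∫ ω, Z i ω ∂(ℙ : Measure Ω) = p := by
    intro i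
    rw [hZ_def]
    calc ∫ ω, g (X i ω) ∂(ℙ : Measure Ω)
        = ∫ x, g x ∂(Measure.map (X i) ℙ) :=
          (integral_map (hXmeas i).aemeasurable hg.aestronglyMeasurable).symm
      _ = ∫ x, g x ∂μ := by rw [hXlaw i]
      _ = p := by
          rw [hg_def, integral_indicator_const (1:ℝ) measurableSet_closedBall, smul_eq_mul,
            mul_one, measureReal_def]
  have hZsq : ∀ i, (Z i) ^ 2 = Z i := by
    intro i
    funext ω
    simp only [Pi.pow_apply, hZval]
    split <;> norm_num
  have hvarZ : ∀ i, variance (Z i) (ℙ : Measure Ω) ≤ 1 := by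
    intro i
    rw [variance_eq_sub (hmem i), hZsq i, hEZ i]
    nlinarith
  set S : Ω → ℝ := ∑ i ∈ Finset.range n, Z i with hS_def
  have hSmem : MemLp S 2 (ℙ : Measure Ω) := memLp_finset_sum' _ (fun i _ => hmem i)
  have hindepZ : ∀ i j : ℕ, i ≠ j → IndepFun (Z i) (Z j) (ℙ : Measure Ω) := by
    intro i j hij
    exact (hXindep.comp (fun _ => g) (fun _ => hg)).indepFun hij
  have hvarS : variance S (ℙ : Measure Ω) ≤ n := by
    rw [hS_def, IndepFun.variance_sum (fun i _ => hmem i)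
      (fun i _ j _ hij => hindepZ i j hij)]
    calc ∑ i ∈ Finset.range n, variance (Z i) (ℙ : Measure Ω)
        ≤ ∑ _i ∈ Finset.range n, (1:ℝ) := Finset.sum_le_sum fun i _ => hvarZ i
      _ = n := by simp
  have hES : ∫ ω, S ω ∂(ℙ : Measure Ω) = n * p := by
    rw [hS_def]
    have : ∫ ω, (∑ i ∈ Finset.range n, Z i) ω ∂(ℙ : Measure Ω)
        = ∑ i ∈ Finset.range n, ∫ ω, Z i ω ∂(ℙ : Measure Ω) := by
      simp only [Finset.sum_apply]
      exact integral_finset_sum _ (fun i _ => (hmem i).integrable one_le_two)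
    rw [this]
    simp [hEZ, Finset.sum_const]
  have hc : (0:ℝ) < n * δ := by positivity
  have hcheb := meas_ge_le_variance_div_sq (μ := (ℙ : Measure Ω)) hSmem hc
  have hSω : ∀ ω, S ω = ((Finset.univ.filter
      fun i : Fin n => dist u (X i ω) ≤ t).card : ℝ) := by
    intro ω
    rw [hS_def]
    simp only [Finset.sum_apply]
    rw [← Fin.sum_univ_eq_sum_range (fun i => Z i ω) n]
    simp only [hZval]
    rw [Finset.sum_boole]
  have hsub : {ω : Ω | δ < |((Finset.univ.filter
        fun i : Fin n => dist u (X i ω) ≤ t).card : ℝ) / n - p|}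
      ⊆ {ω : Ω | n * δ ≤ |S ω - ∫ ω', S ω' ∂(ℙ : Measure Ω)|} := by
    intro ω hω
    simp only [Set.mem_setOf_eq] at hω ⊢
    rw [hES, hSω ω]
    set c : ℝ := ((Finset.univ.filter fun i : Fin n => dist u (X i ω) ≤ t).card : ℝ)
    have hne : (n:ℝ) ≠ 0 := Nat.cast_ne_zero.2 hn.ne'
    have : c - n * p = n * (c / n - p) := by field_simp
    rw [this, abs_mul, abs_of_nonneg (Nat.cast_nonneg n)]
    have := hω.le
    calc (n:ℝ) * δ ≤ (n:ℝ) * |c / n - p| := by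
          apply mul_le_mul_of_nonneg_left this (Nat.cast_nonneg n)
      _ = _ := rfl
  calc (ℙ : Measure Ω) {ω | δ < |((Finset.univ.filter
        fun i : Fin n => dist u (X i ω) ≤ t).card : ℝ) / n - p|}
      ≤ (ℙ : Measure Ω) {ω | n * δ ≤ |S ω - ∫ ω', S ω' ∂(ℙ : Measure Ω)|} :=
        measure_mono hsub
    _ ≤ ENNReal.ofReal (variance S (ℙ : Measure Ω) / (n * δ)^2) := hcheb
    _ ≤ ENNReal.ofReal (1 / (n * δ^2)) := by
        apply ENNReal.ofReal_le_ofReal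
        rw [div_le_div_iff₀ (by positivity) (by positivity)]
        calc variance S (ℙ : Measure Ω) * ((n:ℝ) * δ^2)
            ≤ (n:ℝ) * ((n:ℝ) * δ^2) := mul_le_mul_of_nonneg_right hvarS (by positivity)
          _ = 1 * ((n:ℝ)*δ)^2 := by ring


lemma aux_ball_iUnion {M : Type*} [MetricSpace M] (u : M) {r : ℝ} (hr : 0 < r) :
    ball u r = ⋃ k : ℕ, closedBall u (r - r/(k+2)) := by
  ext v
  simp only [Set.mem_iUnion, mem_ball, mem_closedBall]
  constructor
  · intro h
    obtain ⟨k, hk⟩ := exists_nat_ge (r / (r - dist v u))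
    refine ⟨k, ?_⟩
    have hd : 0 < r - dist v u := sub_pos.2 h
    have h2 : r / (r - dist v u) ≤ (k:ℝ) + 2 := by linarith [hk]
    have h3 : r ≤ ((k:ℝ)+2) * (r - dist v u) := by
      rw [div_le_iff₀ hd] at h2
      linarith
    have hk2 : (0:ℝ) < (k:ℝ)+2 := by positivity
    have : r/((k:ℝ)+2) ≤ r - dist v u := by
      rw [div_le_iff₀ hk2]
      linarith [h3]
    linarith
  · intro ⟨k, hk⟩
    have : (0:ℝ) < r/(k+2) := by positivity
    linarith

lemma aux_seq_mono {M : Type*} [MetricSpace M] (u : M) {r : ℝ} (hr : 0 < r) :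
    Monotone (fun k : ℕ => closedBall u (r - r/(k+2))) := by
  intro a b hab
  apply closedBall_subset_closedBall
  have : r/((b:ℝ)+2) ≤ r/((a:ℝ)+2) := by
    apply div_le_div_of_nonneg_left hr.le (by positivity)
    exact_mod_cast add_le_add_left (Nat.cast_le.2 hab) 2
  linarith

lemma aux_closedBall_eq_ball {M : Type*} [MetricSpace M] [MeasurableSpace M] [BorelSpace M]
    (μ : Measure M) (hsph : ∀ (u : M) (r : ℝ), 0 ≤ r → μ {v | dist u v = r} = 0)
    (u : M) {r : ℝ} (hr : 0 ≤ r) : μ (closedBall u r) = μ (ball u r) := by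
  refine le_antisymm ?_ (measure_mono ball_subset_closedBall)
  have hsplit : closedBall u r ⊆ ball u r ∪ {v | dist u v = r} := by
    intro v hv
    simp only [mem_closedBall] at hv
    rcases lt_or_eq_of_le hv with h | h
    · exact Or.inl (mem_ball.2 h)
    · exact Or.inr (by simp [Set.mem_setOf_eq, dist_comm u v, h])
  calc μ (closedBall u r) ≤ μ (ball u r ∪ {v | dist u v = r}) := measure_mono hsplit
    _ ≤ μ (ball u r) + μ {v | dist u v = r} := measure_union_le _ _
    _ = μ (ball u r) := by rw [hsph u r hr, add_zero]

lemma aux_det {M : Type*} [MetricSpace M] [MeasurableSpace M] [BorelSpace M]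
    (μ : Measure M) [IsProbabilityMeasure μ]
    (hsph : ∀ (u : M) (r : ℝ), 0 ≤ r → μ {v | dist u v = r} = 0)
    {n : ℕ} (hn : 0 < n) (x : Fin n → M) (u : M) {τ ε : ℝ}
    (hτn : 1/(n:ℝ) ≤ τ) (hε : 0 < ε)
    {m : ℕ} (hm : 2 ≤ m) (hminv : 1/(m:ℝ) ≤ ε/2)
    (T : ℕ → ℝ) (hT0 : T 0 = -1)
    (hTq : ∀ l : ℕ, 0 < l → l < m → (μ (closedBall u (T l))).toReal = l/m)
    (hclose : ∀ l : ℕ, l < m → |((Finset.univ.filter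
        fun i : Fin n => dist u (x i) ≤ T l).card : ℝ)/n
        - (μ (closedBall u (T l))).toReal| ≤ ε/2)
    {j : Fin n} (hq : IsEmpLocQuantile x u τ j) :
    |mdf μ u (x j) - τ| ≤ ε := by
  classical
  have hn0 : (0:ℝ) < n := Nat.cast_pos.2 hn
  have hm0 : (0:ℝ) < m := by positivity
  have hminv0 : (0:ℝ) < 1/(m:ℝ) := by positivity
  set G : ℝ → ℝ := fun s =>
    ((Finset.univ.filter fun i : Fin n => dist u (x i) ≤ s).card : ℝ)/n with hG_def
  set F : ℝ → ℝ := fun s => (μ (closedBall u s)).toReal with hF_def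
  have hFmono : Monotone F := fun a b hab =>
    ENNReal.toReal_mono (measure_ne_top μ _)
      (measure_mono (closedBall_subset_closedBall hab))
  have hGmono : Monotone G := by
    intro a b hab
    have hsub : (Finset.univ.filter fun i : Fin n => dist u (x i) ≤ a)
        ⊆ (Finset.univ.filter fun i : Fin n => dist u (x i) ≤ b) :=
      Finset.monotone_filter_right _ (fun i _ hi => le_trans hi hab)
    have hcc := Finset.card_le_card hsub
    show ((Finset.univ.filter fun i : Fin n => dist u (x i) ≤ a).card : ℝ)/n
      ≤ ((Finset.univ.filter fun i : Fin n => dist u (x i) ≤ b).card : ℝ)/n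
    gcongr
  have hG1 : ∀ s, G s ≤ 1 := by
    intro s
    rw [hG_def]
    have := Finset.card_filter_le (Finset.univ : Finset (Fin n))
      (fun i => dist u (x i) ≤ s)
    rw [div_le_one hn0]
    calc ((Finset.univ.filter fun i : Fin n => dist u (x i) ≤ s).card : ℝ)
        ≤ (Finset.univ : Finset (Fin n)).card := by exact_mod_cast this
      _ = n := by simp
  have hG0 : ∀ s, 0 ≤ G s := fun s => by positivity
  have hF1 : ∀ s, F s ≤ 1 := by
    intro s
    calc F s ≤ (1 : ℝ≥0∞).toReal := ENNReal.toReal_mono ENNReal.one_ne_top prob_le_one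
      _ = 1 := ENNReal.toReal_one
  have hF0 : ∀ s, 0 ≤ F s := fun s => ENNReal.toReal_nonneg
  have hGneg : ∀ s, s < 0 → G s = 0 := by
    intro s hs
    rw [hG_def]
    have : (Finset.univ.filter fun i : Fin n => dist u (x i) ≤ s) = ∅ := by
      apply Finset.filter_false_of_mem
      intro i _
      push_neg
      calc s < 0 := hs
        _ ≤ dist u (x i) := dist_nonneg
    simp [this]
  have hFneg : ∀ s, s < 0 → F s = 0 := by
    intro s hs
    rw [hF_def]
    simp [closedBall_eq_empty.2 hs]
  have hFTl : ∀ l : ℕ, l < m → F (T l) = l/m := by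
    intro l hl
    rcases Nat.eq_zero_or_pos l with h | h
    · subst h
      rw [hT0]
      simp [hFneg (-1) (by norm_num)]
    · exact hTq l h hl
  -- key two-sided bound
  have key : ∀ s : ℝ, G s ≤ F s + (ε/2 + 1/m) ∧ F s ≤ G s + (ε/2 + 1/m) := by
    intro s
    by_cases hs : s < -1
    · have h1 : G s = 0 := hGneg s (by linarith)
      have h2 : F s = 0 := hFneg s (by linarith)
      constructor <;> (rw [h1, h2]; linarith)
    · push_neg at hs
      set L := (Finset.range m).filter (fun l => T l ≤ s) with hL_def
      have h0L : 0 ∈ L :=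
        Finset.mem_filter.2 ⟨Finset.mem_range.2 (by omega), by rw [hT0]; exact hs⟩
      have hLne : L.Nonempty := ⟨0, h0L⟩
      set l := L.max' hLne with hl_def
      have hlmem : l ∈ L := L.max'_mem hLne
      have hlm : l < m := Finset.mem_range.1 (Finset.mem_filter.1 hlmem).1
      have hTls : T l ≤ s := (Finset.mem_filter.1 hlmem).2
      have hFl : F (T l) = l/m := hFTl l hlm
      have hGl : |G (T l) - F (T l)| ≤ ε/2 := hclose l hlm
      rw [abs_le] at hGl
      by_cases hlast : l + 1 < m
      · have hs' : s < T (l+1) := by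
          by_contra hc
          push_neg at hc
          have : l + 1 ∈ L :=
            Finset.mem_filter.2 ⟨Finset.mem_range.2 hlast, hc⟩
          have := L.le_max' _ this
          omega
        have hFl1 : F (T (l+1)) = ((l:ℝ)+1)/m := by
          have := hFTl (l+1) hlast
          rwa [Nat.cast_add, Nat.cast_one] at this
        have hGl1 : |G (T (l+1)) - F (T (l+1))| ≤ ε/2 := hclose (l+1) hlast
        rw [abs_le] at hGl1
        have hcast : ((l:ℝ)+1)/m = (l:ℝ)/m + 1/m := by ring
        constructor
        · have h1 : G s ≤ G (T (l+1)) := hGmono hs'.le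
          have h2 : F (T l) ≤ F s := hFmono hTls
          rw [hFl1, hcast] at hGl1
          rw [hFl] at h2
          linarith [hGl1.2]
        · have h1 : F s ≤ F (T (l+1)) := hFmono hs'.le
          have h2 : G (T l) ≤ G s := hGmono hTls
          rw [hFl1, hcast] at h1
          rw [hFl] at hGl
          linarith [hGl.1]
      · have hlm' : l + 1 = m := by omega
        have hcast : (l:ℝ)/m = 1 - 1/m := by
          have : (l:ℝ) = (m:ℝ) - 1 := by
            have : ((l:ℕ):ℝ) + 1 = ((m:ℕ):ℝ) := by exact_mod_cast congrArg (Nat.cast : ℕ → ℝ) hlm'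
            linarith
          rw [this]
          field_simp
        rw [hcast] at hFl
        constructor
        · have h2 : F (T l) ≤ F s := hFmono hTls
          rw [hFl] at h2
          linarith [hG1 s, hε]
        · have h2 : G (T l) ≤ G s := hGmono hTls
          rw [hFl] at hGl
          linarith [hF1 s, hGl.1]
  -- now the quantile argument
  set r : ℝ := dist u (x j) with hr_def
  have hr0 : 0 ≤ r := dist_nonneg
  have hGr : emdf x u (x j) = G r := rfl
  have hτG : τ ≤ G r := hq.1
  have hτ0 : 0 < τ := lt_of_lt_of_le (by positivity) hτn
  -- lower bound
  have hlower : τ - ε ≤ F r := by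
    have := (key r).1
    have hεm : ε/2 + 1/m ≤ ε := by linarith
    linarith
  -- strict count
  set c : ℕ := (Finset.univ.filter fun i : Fin n => dist u (x i) < r).card with hc_def
  have hcτ : (c:ℝ)/n < τ := by
    by_contra hcon
    push_neg at hcon
    have hcne : c ≠ 0 := by
      intro h0
      rw [h0] at hcon
      simp at hcon
      linarith
    have hne : (Finset.univ.filter fun i : Fin n => dist u (x i) < r).Nonempty := by
      rw [← Finset.card_pos]
      exact Nat.pos_of_ne_zero hcne
    obtain ⟨i0, hi0mem, hi0max⟩ := Finset.exists_max_image _ (fun i => dist u (x i)) hne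
    have hi0lt : dist u (x i0) < r := (Finset.mem_filter.1 hi0mem).2
    have hset : (Finset.univ.filter fun i : Fin n => dist u (x i) ≤ dist u (x i0))
        = (Finset.univ.filter fun i : Fin n => dist u (x i) < r) := by
      ext i
      simp only [Finset.mem_filter, Finset.mem_univ, true_and]
      constructor
      · intro h
        exact lt_of_le_of_lt h hi0lt
      · intro h
        exact hi0max i (Finset.mem_filter.2 ⟨Finset.mem_univ i, h⟩)
    have hGi0 : emdf x u (x i0) = (c:ℝ)/n := by
      rw [emdf, hset, hc_def]
    have hle := hq.2 i0 (by rw [hGi0]; exact hcon)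
    -- emdf x u (x j) ≥ (c+1)/n
    have hjnot : j ∉ (Finset.univ.filter fun i : Fin n => dist u (x i) < r) := by
      simp only [Finset.mem_filter, Finset.mem_univ, true_and, hr_def]
      exact lt_irrefl _
    have hsubset : insert j (Finset.univ.filter fun i : Fin n => dist u (x i) < r)
        ⊆ (Finset.univ.filter fun i : Fin n => dist u (x i) ≤ dist u (x j)) := by
      intro i hi
      rcases Finset.mem_insert.1 hi with h | h
      · subst h
        simp
      · simp only [Finset.mem_filter, Finset.mem_univ, true_and] at h ⊢
        rw [← hr_def]
        exact h.le
    have hcard : c + 1 ≤ (Finset.univ.filter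
        fun i : Fin n => dist u (x i) ≤ dist u (x j)).card := by
      have := Finset.card_le_card hsubset
      rw [Finset.card_insert_of_notMem hjnot] at this
      exact this
    have hGrge : ((c:ℝ)+1)/n ≤ emdf x u (x j) := by
      rw [emdf]
      gcongr
      exact_mod_cast hcard
    rw [hGi0] at hle
    have : ((c:ℝ)+1)/n ≤ (c:ℝ)/n := le_trans hGrge hle
    rw [div_le_div_iff_of_pos_right hn0] at this
    linarith
  -- upper bound for F r
  have hupper : F r ≤ (c:ℝ)/n + (ε/2 + 1/m) := by
    rcases eq_or_lt_of_le hr0 with h | h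
    · -- r = 0
      have : closedBall u r ⊆ {v | dist u v = 0} := by
        intro v hv
        simp only [mem_closedBall, ← h] at hv
        have := dist_nonneg (x := v) (y := u)
        simp only [Set.mem_setOf_eq, dist_comm u v]
        linarith
      have hF0' : F r = 0 := by
        rw [hF_def]
        have := le_trans (measure_mono this) (le_of_eq (hsph u 0 le_rfl))
        simp only [le_zero_iff] at this
        simp [this]
      rw [hF0']
      positivity
    · -- r > 0
      set B : ℝ := (c:ℝ)/n + (ε/2 + 1/m) with hB_def
      have hB0 : 0 ≤ B := by positivity
      have hGs : ∀ s, s < r → G s ≤ (c:ℝ)/n := by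
        intro s hs
        have hsub : (Finset.univ.filter fun i : Fin n => dist u (x i) ≤ s)
            ⊆ (Finset.univ.filter fun i : Fin n => dist u (x i) < r) :=
          Finset.monotone_filter_right _ (fun i _ hi => lt_of_le_of_lt hi hs)
        have hcc := Finset.card_le_card hsub
        show ((Finset.univ.filter fun i : Fin n => dist u (x i) ≤ s).card : ℝ)/n ≤ (c:ℝ)/n
        gcongr
      have hFs : ∀ s, s < r → F s ≤ B := by
        intro s hs
        have := (key s).2
        have := hGs s hs
        rw [hB_def]
        linarith
      have hballB : μ (ball u r) ≤ ENNReal.ofReal B := by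
        rw [aux_ball_iUnion u h, (aux_seq_mono u h).measure_iUnion]
        refine iSup_le fun k => ?_
        rw [ENNReal.le_ofReal_iff_toReal_le (measure_ne_top μ _) hB0]
        have hlt : r - r/(k+2) < r := by
          have : (0:ℝ) < r/(k+2) := by positivity
          linarith
        exact hFs _ hlt
      have : μ (closedBall u r) ≤ ENNReal.ofReal B := by
        rw [aux_closedBall_eq_ball μ hsph u hr0]
        exact hballB
      calc F r ≤ (ENNReal.ofReal B).toReal := ENNReal.toReal_mono ENNReal.ofReal_ne_top this
        _ = B := ENNReal.toReal_ofReal hB0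
  have hεm : ε/2 + 1/m ≤ ε := by linarith
  have hmdf : mdf μ u (x j) = F r := rfl
  rw [hmdf, abs_le]
  constructor
  · linarith
  · linarith



/-- Uniform consistency of the empirical local metric quantile: under the
entropy (Glivenko–Cantelli) condition and nullity of spheres, for every `ε > 0` the outer
probability that some `τ`-th empirical local quantile `X_j` at `u` has
`|F_μ(u,X_j) − τ| > ε`, taken `sup` over `u ∈ M` and `τ ∈ [1/n,1]`, tends to `0`. -/
theorem emp_local_quantile_uniform_consistency
    {M : Type*} [MetricSpace M] [TopologicalSpace.SeparableSpace M]
    [MeasurableSpace M] [BorelSpace M]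
    (μ : Measure M) [IsProbabilityMeasure μ]
    (hsph : ∀ (u : M) (r : ℝ), 0 ≤ r → μ {v | dist u v = r} = 0)
    {Ω : Type*} [MeasureSpace Ω] [IsProbabilityMeasure (ℙ : Measure Ω)]
    (X : ℕ → Ω → M)
    (hXmeas : ∀ i, Measurable (X i))
    (hXlaw : ∀ i, Measure.map (X i) ℙ = μ)
    (hXindep : iIndepFun X ℙ)
    (hentropy : Tendsto (fun n : ℕ =>
      (1 / (n : ℝ)) * ∫ ω, Real.log (Nat.card
        {b : Fin n → Prop // ∃ u v : M, ∀ i : Fin n, b i ↔ dist u (X i ω) ≤ dist u v}) ∂ℙ)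
      atTop (nhds 0)) :
    ∀ ε > (0 : ℝ), Tendsto (fun n : ℕ =>
      ⨆ (u : M) (τ : ℝ) (_ : τ ∈ Set.Icc (1 / (n : ℝ)) 1),
        (ℙ : Measure Ω) {ω | ∃ j : Fin n,
          IsEmpLocQuantile (fun i : Fin n => X i ω) u τ j ∧ |mdf μ u (X j ω) - τ| > ε})
      atTop (nhds (0 : ENNReal)) := by
  intro ε hε
  classical
  set m : ℕ := max 2 ⌈(2:ℝ)/ε⌉₊ with hm_def
  have hm2 : 2 ≤ m := le_max_left _ _
  have hm0 : (0:ℝ) < m := by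
    have : (2:ℝ) ≤ m := by exact_mod_cast hm2
    linarith
  have hminv : 1/(m:ℝ) ≤ ε/2 := by
    have h1 : (2:ℝ)/ε ≤ m := le_trans (Nat.le_ceil _)
      (by exact_mod_cast le_max_right 2 ⌈(2:ℝ)/ε⌉₊)
    have h2 : 1/(m:ℝ) ≤ 1/((2:ℝ)/ε) := one_div_le_one_div_of_le (by positivity) h1
    rwa [one_div_div] at h2
  set b : ℕ → ℝ≥0∞ := fun n => (m : ℝ≥0∞) * ENNReal.ofReal (1/(n*(ε/2)^2)) with hb_def
  have hb : ∀ n : ℕ, (⨆ (u : M) (τ : ℝ) (_ : τ ∈ Set.Icc (1 / (n : ℝ)) 1),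
      (ℙ : Measure Ω) {ω | ∃ j : Fin n,
        IsEmpLocQuantile (fun i : Fin n => X i ω) u τ j ∧ |mdf μ u (X j ω) - τ| > ε}) ≤ b n := by
    intro n
    refine iSup_le fun u => iSup_le fun τ => iSup_le fun hτ => ?_
    by_cases hn : n = 0
    · subst hn
      have hE : {ω : Ω | ∃ j : Fin 0,
          IsEmpLocQuantile (fun i : Fin 0 => X i ω) u τ j ∧ |mdf μ u (X j ω) - τ| > ε} = ∅ :=
        Set.eq_empty_of_forall_notMem (fun ω hω => hω.choose.elim0)
      rw [hE, measure_empty]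
      exact zero_le
    have hn0 : 0 < n := Nat.pos_of_ne_zero hn
    have hτn : 1/(n:ℝ) ≤ τ := hτ.1
    -- the quantile grid
    have hexT : ∀ l : ℕ, ∃ t : ℝ, (l = 0 → t = -1) ∧
        (0 < l → l < m → (μ (closedBall u t)).toReal = l/m) := by
      intro l
      by_cases h0 : l = 0
      · exact ⟨-1, fun _ => rfl, fun h _ => absurd h0 (by omega)⟩
      · by_cases hlm : l < m
        · obtain ⟨t, _, ht⟩ := aux_exists_quantile μ hsph u (q := (l:ℝ)/m)
            (div_pos (by exact_mod_cast Nat.pos_of_ne_zero h0) hm0)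
            ((div_lt_one hm0).2 (by exact_mod_cast hlm))
          exact ⟨t, fun h => absurd h h0, fun _ _ => ht⟩
        · exact ⟨-1, fun h => absurd h h0, fun _ h => absurd h hlm⟩
    choose T hT0' hTq' using hexT
    set Bl : ℕ → Set Ω := fun l => {ω | ε/2 < |((Finset.univ.filter
        fun i : Fin n => dist u (X i ω) ≤ T l).card : ℝ)/n
        - (μ (closedBall u (T l))).toReal|} with hBl_def
    have hsub : {ω : Ω | ∃ j : Fin n,
        IsEmpLocQuantile (fun i : Fin n => X i ω) u τ j ∧ |mdf μ u (X j ω) - τ| > ε}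
        ⊆ ⋃ l ∈ Finset.range m, Bl l := by
      intro ω hω
      by_contra hc
      simp only [Set.mem_iUnion, not_exists] at hc
      have hclose : ∀ l : ℕ, l < m → |((Finset.univ.filter
          fun i : Fin n => dist u (X i ω) ≤ T l).card : ℝ)/n
          - (μ (closedBall u (T l))).toReal| ≤ ε/2 := by
        intro l hl
        have := hc l (Finset.mem_range.2 hl)
        rw [hBl_def] at this
        simpa using not_lt.1 this
      obtain ⟨j, hj, hgt⟩ := hω
      have hdet := aux_det μ hsph hn0 (fun i : Fin n => X i ω) u hτn hε hm2 hminv T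
        (hT0' 0 rfl) (fun l h1 h2 => hTq' l h1 h2) hclose hj
      exact absurd hdet (not_le.2 hgt)
    calc (ℙ : Measure Ω) {ω | ∃ j : Fin n,
        IsEmpLocQuantile (fun i : Fin n => X i ω) u τ j ∧ |mdf μ u (X j ω) - τ| > ε}
        ≤ (ℙ : Measure Ω) (⋃ l ∈ Finset.range m, Bl l) := measure_mono hsub
      _ ≤ ∑ l ∈ Finset.range m, (ℙ : Measure Ω) (Bl l) := measure_biUnion_finset_le _ _
      _ ≤ ∑ _l ∈ Finset.range m, ENNReal.ofReal (1/(n*(ε/2)^2)) :=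
          Finset.sum_le_sum fun l _ =>
            aux_cheb μ X hXmeas hXlaw hXindep u (T l) hn0 (half_pos hε)
      _ = b n := by
          rw [Finset.sum_const, Finset.card_range, nsmul_eq_mul, hb_def]
  have h1 : Tendsto (fun n : ℕ => (1:ℝ)/(n*(ε/2)^2)) atTop (𝓝 0) := by
    have h2 := tendsto_one_div_atTop_nhds_zero_nat.mul_const (1/(ε/2)^2)
    rw [zero_mul] at h2
    convert h2 using 2 with n
    rw [div_mul_div_comm, one_mul]
  have h2 : Tendsto (fun n : ℕ => ENNReal.ofReal (1/(n*(ε/2)^2))) atTop (𝓝 0) := by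
    rw [← ENNReal.ofReal_zero]
    exact (ENNReal.continuous_ofReal.tendsto 0).comp h1
  have hb0 : Tendsto b atTop (𝓝 0) := by
    have := ENNReal.Tendsto.const_mul h2 (Or.inr (ENNReal.natCast_ne_top m))
    rwa [mul_zero] at this
  exact tendsto_of_tendsto_of_tendsto_of_le_of_le tendsto_const_nhds hb0
    (fun n => zero_le) hb
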